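/- Let W satisfy (Self), let V satisfy (Cross), let ν be a nonnegative finite Borel measure on ℝ^d with ν(ℝ^d) ≤ M, let τ > 0, let ρ₀ ∈ P₂(ℝ^d), and let ρ₁ ∈ P₂(ℝ^d) be a minimizer over P₂(ℝ^d) of the penalised functional μ ↦ (1/(2τ)) d_{W₂}²(ρ₀,μ) + ℱ_ν(μ). Then d_{W₂}(ρ₀,ρ₁) ≤ 6 (M·Lip(V) + Lip(W)) τ, where Lip(W) and Lip(V) denote the Lipschitz constants of W and V. -/

import Mathlib

open MeasureTheory Filter
open scoped ENNReal NNReal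

noncomputable section

/-- Euclidean space `ℝ^d`. -/
abbrev Rd (d : ℕ) := EuclideanSpace ℝ (Fin d)

/-- The set of couplings of two measures: measures on the product space with the
prescribed marginals. -/
def couplings {d : ℕ} (μ ν : Measure (Rd d)) : Set (Measure (Rd d × Rd d)) :=
  {γ | γ.map Prod.fst = μ ∧ γ.map Prod.snd = ν}

/-- Optimal transport cost with squared-distance cost, in `ℝ≥0∞`. -/
def cost2 {d : ℕ} (μ ν : Measure (Rd d)) : ℝ≥0∞ :=
  ⨅ γ ∈ couplings μ ν, ∫⁻ z : Rd d × Rd d, ENNReal.ofReal (‖z.1 - z.2‖ ^ 2) ∂γ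

/-- The 2-Wasserstein distance, valued in `ℝ≥0∞`. -/
def W2 {d : ℕ} (μ ν : Measure (Rd d)) : ℝ≥0∞ := cost2 μ ν ^ (1 / 2 : ℝ)

/-- The squared 2-Wasserstein distance `d_{W₂}²(μ,ν)`, as a real number. -/
def W2sq {d : ℕ} (μ ν : Measure (Rd d)) : ℝ := (cost2 μ ν).toReal

/-- Membership in `P₂(ℝ^d)`: probability measure with finite second moment. -/
def MemP2 {d : ℕ} (μ : Measure (Rd d)) : Prop :=
  IsProbabilityMeasure μ ∧ ∫⁻ x, ENNReal.ofReal (‖x‖ ^ 2) ∂μ < ⊤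

/-- The energy functional `ℱ_ν(μ) = (1/2)∫∫W(x-y) dμ(y) dμ(x) + ∫∫V(x-y) dν(y) dμ(x)`. -/
def energy {d : ℕ} (W V : Rd d → ℝ) (ν μ : Measure (Rd d)) : ℝ :=
  (1 / 2) * ∫ x, (∫ y, W (x - y) ∂μ) ∂μ + ∫ x, (∫ y, V (x - y) ∂ν) ∂μ

/-- Assumption (Self) on the self-interaction potential `W`, with gradient `W'` away from
the origin, convexity parameter `lam ≤ 0` and Lipschitz constant `KW`. -/
structure IsSelfPotential {d : ℕ} (W : Rd d → ℝ) (W' : Rd d → Rd d) (lam : ℝ) (KW : ℝ≥0) :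
    Prop where
  cont : Continuous W
  grad : ∀ x : Rd d, x ≠ 0 → HasGradientAt W (W' x) x
  grad_cont : ContinuousOn W' {(0 : Rd d)}ᶜ
  even : ∀ x, W (-x) = W x
  lip : LipschitzWith KW W
  zero_at_zero : W 0 = 0
  growth : ∃ C > 0, ∀ x, W x ≤ C * (1 + ‖x‖ ^ 2)
  lam_nonpos : lam ≤ 0
  lam_convex : ConvexOn ℝ Set.univ fun x => W x - lam / 2 * ‖x‖ ^ 2

/-- Assumption (Cross) on the cross-interaction potential `V`, with gradient `V'` and
Lipschitz constant `KV`. -/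
structure IsCrossPotential {d : ℕ} (V : Rd d → ℝ) (V' : Rd d → Rd d) (KV : ℝ≥0) :
    Prop where
  contDiff : ContDiff ℝ 1 V
  grad : ∀ x, HasGradientAt V (V' x) x
  lip : LipschitzWith KV V
  bddBelow : ∃ V₀ : ℝ, ∀ x, V₀ ≤ V x

variable {d : ℕ} {ρ₀ ρ₁ : Measure (Rd d)} {γ : Measure (Rd d × Rd d)}

lemma integrable_of_lintegral_lt {α : Type*} [MeasurableSpace α] [TopologicalSpace α]
    [OpensMeasurableSpace α] {μ : Measure α}
    {f : α → ℝ} (hf : Continuous f) (h0 : ∀ x, 0 ≤ f x)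
    (h : ∫⁻ x, ENNReal.ofReal (f x) ∂μ < ⊤) : Integrable f μ := by
  refine ⟨hf.aestronglyMeasurable, ?_⟩
  rw [hasFiniteIntegral_iff_norm]
  simpa only [Real.norm_of_nonneg (h0 _)] using h

lemma memP2_integrable_sq {μ : Measure (Rd d)} (h : MemP2 μ) :
    Integrable (fun x => ‖x‖ ^ 2) μ :=
  integrable_of_lintegral_lt (by fun_prop) (fun x => sq_nonneg _) h.2

lemma memP2_integrable_norm {μ : Measure (Rd d)} (h : MemP2 μ) :
    Integrable (fun x => ‖x‖) μ := by
  have := h.1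
  refine Integrable.mono ((memP2_integrable_sq h).add (integrable_const 1)) (by fun_prop) ?_
  filter_upwards with x
  simp only [Pi.add_apply]
  rw [Real.norm_of_nonneg (norm_nonneg x), Real.norm_of_nonneg (by positivity)]
  rcases le_total (‖x‖) 1 with h1 | h1
  · nlinarith [sq_nonneg ‖x‖]
  · nlinarith

lemma coupling_prob (hγ : γ ∈ couplings ρ₀ ρ₁) (h0 : IsProbabilityMeasure ρ₀) :
    IsProbabilityMeasure γ := by
  constructor
  have : γ.map Prod.fst Set.univ = 1 := by rw [hγ.1]; exact h0.measure_univ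
  rwa [Measure.map_apply measurable_fst MeasurableSet.univ, Set.preimage_univ] at this

lemma integral_fst (hγ : γ ∈ couplings ρ₀ ρ₁) {f : Rd d → ℝ} (hf : Continuous f) :
    ∫ z, f z.1 ∂γ = ∫ x, f x ∂ρ₀ := by
  rw [← hγ.1, integral_map measurable_fst.aemeasurable hf.aestronglyMeasurable]

lemma integral_snd (hγ : γ ∈ couplings ρ₀ ρ₁) {f : Rd d → ℝ} (hf : Continuous f) :
    ∫ z, f z.2 ∂γ = ∫ x, f x ∂ρ₁ := by
  rw [← hγ.2, integral_map measurable_snd.aemeasurable hf.aestronglyMeasurable]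

lemma integrable_fst (hγ : γ ∈ couplings ρ₀ ρ₁) {f : Rd d → ℝ} (hf : Continuous f)
    (hi : Integrable f ρ₀) : Integrable (fun z => f z.1) γ :=
  (integrable_map_measure (hγ.1 ▸ hf.aestronglyMeasurable)
    measurable_fst.aemeasurable).mp (hγ.1 ▸ hi)

lemma integrable_snd (hγ : γ ∈ couplings ρ₀ ρ₁) {f : Rd d → ℝ} (hf : Continuous f)
    (hi : Integrable f ρ₁) : Integrable (fun z => f z.2) γ :=
  (integrable_map_measure (hγ.2 ▸ hf.aestronglyMeasurable)
    measurable_snd.aemeasurable).mp (hγ.2 ▸ hi)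

/-- A Lipschitz function is integrable against a measure with finite first moment. -/
lemma lipschitz_integrable {K : ℝ≥0} {g : Rd d → ℝ} (hg : LipschitzWith K g)
    {μ : Measure (Rd d)} (h : MemP2 μ) : Integrable g μ := by
  have := h.1
  refine Integrable.mono ((integrable_const |g 0|).add
    ((memP2_integrable_norm h).const_mul K)) hg.continuous.aestronglyMeasurable ?_
  filter_upwards with x
  simp only [Pi.add_apply]
  have hd := hg.dist_le_mul x 0
  rw [Real.dist_eq, dist_eq_norm, sub_zero] at hd
  have hr : ‖(|g 0| + ↑K * ‖x‖ : ℝ)‖ = |g 0| + ↑K * ‖x‖ := Real.norm_of_nonneg (by positivity)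
  rw [hr, Real.norm_eq_abs]
  have habs := abs_sub_abs_le_abs_sub (g x) (g 0)
  linarith
lemma lipschitz_integral_kernel {α : Type*} [MeasurableSpace α] (ν : Measure α)
    [IsFiniteMeasure ν] (K : ℝ≥0) (φ : Rd d → α → ℝ)
    (hlip : ∀ (a : α) (x x' : Rd d), |φ x a - φ x' a| ≤ K * ‖x - x'‖)
    (hint : ∀ x, Integrable (φ x) ν) :
    LipschitzWith (K * (ν Set.univ).toNNReal) (fun x => ∫ a, φ x a ∂ν) := by
  refine LipschitzWith.of_dist_le_mul fun x x' => ?_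
  rw [Real.dist_eq, ← integral_sub (hint x) (hint x')]
  calc |∫ a, (φ x a - φ x' a) ∂ν| ≤ ∫ a, |φ x a - φ x' a| ∂ν := by
        simpa using norm_integral_le_integral_norm (μ := ν) (f := fun a => φ x a - φ x' a)
    _ ≤ ∫ _a, (K : ℝ) * ‖x - x'‖ ∂ν := by
        refine integral_mono ((hint x).sub (hint x')).abs (integrable_const _) fun a => hlip a x x'
    _ = (ν Set.univ).toReal * ((K : ℝ) * ‖x - x'‖) := by rw [integral_const]; simp [Measure.real]
    _ = ↑(K * (ν Set.univ).toNNReal) * dist x x' := by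
        rw [dist_eq_norm]
        push_cast
        ring

lemma coupling_integrable_dist (hγ : γ ∈ couplings ρ₀ ρ₁) (h0 : MemP2 ρ₀) (h1 : MemP2 ρ₁) :
    Integrable (fun z : Rd d × Rd d => ‖z.1 - z.2‖) γ := by
  have n1 : Integrable (fun z : Rd d × Rd d => ‖z.1‖) γ :=
    integrable_fst hγ continuous_norm (memP2_integrable_norm h0)
  have n2 : Integrable (fun z : Rd d × Rd d => ‖z.2‖) γ :=
    integrable_snd hγ continuous_norm (memP2_integrable_norm h1)
  refine Integrable.mono (n1.add n2) (continuous_fst.sub continuous_snd).norm.aestronglyMeasurable ?_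
  filter_upwards with z
  simp only [Pi.add_apply]
  rw [Real.norm_of_nonneg (norm_nonneg _), Real.norm_of_nonneg (by positivity)]
  exact norm_sub_le _ _

lemma self_diff_le {Wf : Rd d → ℝ} {KW : ℝ≥0} (hWl : LipschitzWith KW Wf) (hW0 : Wf 0 = 0)
    (hγ : γ ∈ couplings ρ₀ ρ₁) (h0 : MemP2 ρ₀) (h1 : MemP2 ρ₁) :
    (∫ x, (∫ y, Wf (x - y) ∂ρ₀) ∂ρ₀) - (∫ x, (∫ y, Wf (x - y) ∂ρ₁) ∂ρ₁)
      ≤ 2 * KW * ∫ z, ‖z.1 - z.2‖ ∂γ := by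
  have hγp : IsProbabilityMeasure γ := coupling_prob hγ h0.1
  have hWc : Continuous Wf := hWl.continuous
  have n1 : Integrable (fun z : Rd d × Rd d => ‖z.1‖) γ :=
    integrable_fst hγ continuous_norm (memP2_integrable_norm h0)
  have n2 : Integrable (fun z : Rd d × Rd d => ‖z.2‖) γ :=
    integrable_snd hγ continuous_norm (memP2_integrable_norm h1)
  have hmint : Integrable (fun z : Rd d × Rd d => ‖z.1 - z.2‖) γ :=
    coupling_integrable_dist hγ h0 h1
  set m := ∫ z, ‖z.1 - z.2‖ ∂γ with hm
  have hWd : ∀ a b : Rd d, |Wf a - Wf b| ≤ (KW : ℝ) * ‖a - b‖ := by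
    intro a b
    have := hWl.dist_le_mul a b
    rwa [Real.dist_eq, dist_eq_norm] at this
  have hWbound : ∀ a : Rd d, |Wf a| ≤ (KW : ℝ) * ‖a‖ := by
    intro a; have := hWd a 0; simpa [hW0] using this
  -- integrability of the kernels
  have hint0 : ∀ x : Rd d, Integrable (fun w : Rd d × Rd d => Wf (x - w.1)) γ := by
    intro x
    refine Integrable.mono ((integrable_const ((KW : ℝ) * ‖x‖)).add (n1.const_mul KW))
      (hWc.comp (continuous_const.sub continuous_fst)).aestronglyMeasurable ?_
    filter_upwards with w
    simp only [Pi.add_apply]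
    rw [Real.norm_eq_abs, Real.norm_of_nonneg (by positivity)]
    calc |Wf (x - w.1)| ≤ (KW : ℝ) * ‖x - w.1‖ := hWbound _
      _ ≤ (KW : ℝ) * (‖x‖ + ‖w.1‖) := by
          have := norm_sub_le x w.1
          nlinarith [KW.coe_nonneg]
      _ = (KW : ℝ) * ‖x‖ + (KW : ℝ) * ‖w.1‖ := by ring
  have hint1 : ∀ x : Rd d, Integrable (fun w : Rd d × Rd d => Wf (x - w.2)) γ := by
    intro x
    refine Integrable.mono ((integrable_const ((KW : ℝ) * ‖x‖)).add (n2.const_mul KW))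
      (hWc.comp (continuous_const.sub continuous_snd)).aestronglyMeasurable ?_
    filter_upwards with w
    simp only [Pi.add_apply]
    rw [Real.norm_eq_abs, Real.norm_of_nonneg (by positivity)]
    calc |Wf (x - w.2)| ≤ (KW : ℝ) * ‖x - w.2‖ := hWbound _
      _ ≤ (KW : ℝ) * (‖x‖ + ‖w.2‖) := by
          have := norm_sub_le x w.2
          nlinarith [KW.coe_nonneg]
      _ = (KW : ℝ) * ‖x‖ + (KW : ℝ) * ‖w.2‖ := by ring
  set g0 : Rd d → ℝ := fun x => ∫ w : Rd d × Rd d, Wf (x - w.1) ∂γ with hg0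
  set g1 : Rd d → ℝ := fun x => ∫ w : Rd d × Rd d, Wf (x - w.2) ∂γ with hg1
  have hlip0 : LipschitzWith (KW * (γ Set.univ).toNNReal) g0 := by
    refine lipschitz_integral_kernel γ KW _ (fun w x x' => ?_) hint0
    calc |Wf (x - w.1) - Wf (x' - w.1)| ≤ (KW : ℝ) * ‖(x - w.1) - (x' - w.1)‖ := hWd _ _
      _ = (KW : ℝ) * ‖x - x'‖ := by rw [sub_sub_sub_cancel_right]
  have hlip1 : LipschitzWith (KW * (γ Set.univ).toNNReal) g1 := by
    refine lipschitz_integral_kernel γ KW _ (fun w x x' => ?_) hint1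
    calc |Wf (x - w.2) - Wf (x' - w.2)| ≤ (KW : ℝ) * ‖(x - w.2) - (x' - w.2)‖ := hWd _ _
      _ = (KW : ℝ) * ‖x - x'‖ := by rw [sub_sub_sub_cancel_right]
  have e0 : ∫ x, (∫ y, Wf (x - y) ∂ρ₀) ∂ρ₀ = ∫ z, g0 z.1 ∂γ := by
    have inner : ∀ x : Rd d, ∫ y, Wf (x - y) ∂ρ₀ = g0 x := fun x =>
      (integral_fst hγ (f := fun y => Wf (x - y)) (hWc.comp (continuous_const.sub continuous_id))).symm
    rw [integral_congr_ae (ae_of_all _ inner)]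
    exact (integral_fst hγ hlip0.continuous).symm
  have e1 : ∫ x, (∫ y, Wf (x - y) ∂ρ₁) ∂ρ₁ = ∫ z, g1 z.2 ∂γ := by
    have inner : ∀ x : Rd d, ∫ y, Wf (x - y) ∂ρ₁ = g1 x := fun x =>
      (integral_snd hγ (f := fun y => Wf (x - y)) (hWc.comp (continuous_const.sub continuous_id))).symm
    rw [integral_congr_ae (ae_of_all _ inner)]
    exact (integral_snd hγ hlip1.continuous).symm
  have hgint0 : Integrable (fun z : Rd d × Rd d => g0 z.1) γ :=
    integrable_fst hγ hlip0.continuous (lipschitz_integrable hlip0 h0)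
  have hgint1 : Integrable (fun z : Rd d × Rd d => g1 z.2) γ :=
    integrable_snd hγ hlip1.continuous (lipschitz_integrable hlip1 h1)
  have hpt : ∀ z : Rd d × Rd d, g0 z.1 - g1 z.2 ≤ (KW : ℝ) * ‖z.1 - z.2‖ + (KW : ℝ) * m := by
    intro z
    have e : g0 z.1 - g1 z.2 = ∫ w : Rd d × Rd d, (Wf (z.1 - w.1) - Wf (z.2 - w.2)) ∂γ :=
      (integral_sub (hint0 z.1) (hint1 z.2)).symm
    rw [e]
    calc ∫ w : Rd d × Rd d, (Wf (z.1 - w.1) - Wf (z.2 - w.2)) ∂γ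
        ≤ ∫ w : Rd d × Rd d, ((KW : ℝ) * ‖z.1 - z.2‖ + (KW : ℝ) * ‖w.1 - w.2‖) ∂γ := by
          refine integral_mono ((hint0 z.1).sub (hint1 z.2))
            ((integrable_const _).add (hmint.const_mul _)) (fun w => ?_)
          have h1' := hWd (z.1 - w.1) (z.2 - w.2)
          have h2' : ‖(z.1 - w.1) - (z.2 - w.2)‖ ≤ ‖z.1 - z.2‖ + ‖w.1 - w.2‖ := by
            rw [sub_sub_sub_comm]
            exact norm_sub_le _ _
          have h3' := le_abs_self (Wf (z.1 - w.1) - Wf (z.2 - w.2))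
          nlinarith [KW.coe_nonneg]
      _ = (KW : ℝ) * ‖z.1 - z.2‖ + (KW : ℝ) * m := by
          rw [integral_add (integrable_const _) (hmint.const_mul _), integral_const,
            integral_const_mul, probReal_univ]
          simp [hm]
  calc (∫ x, (∫ y, Wf (x - y) ∂ρ₀) ∂ρ₀) - ∫ x, (∫ y, Wf (x - y) ∂ρ₁) ∂ρ₁
      = ∫ z : Rd d × Rd d, (g0 z.1 - g1 z.2) ∂γ := by
        rw [e0, e1, integral_sub hgint0 hgint1]
    _ ≤ ∫ z : Rd d × Rd d, ((KW : ℝ) * ‖z.1 - z.2‖ + (KW : ℝ) * m) ∂γ :=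
        integral_mono (hgint0.sub hgint1)
          ((hmint.const_mul _).add (integrable_const _)) hpt
    _ = 2 * KW * m := by
        rw [integral_add (hmint.const_mul _) (integrable_const _), integral_const,
          integral_const_mul, probReal_univ]
        simp; ring

lemma cross_diff_le {Vf : Rd d → ℝ} {KV : ℝ≥0} (hVl : LipschitzWith KV Vf)
    (ν : Measure (Rd d)) [IsFiniteMeasure ν]
    (hγ : γ ∈ couplings ρ₀ ρ₁) (h0 : MemP2 ρ₀) (h1 : MemP2 ρ₁) :
    (∫ x, (∫ y, Vf (x - y) ∂ν) ∂ρ₀) - (∫ x, (∫ y, Vf (x - y) ∂ν) ∂ρ₁)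
      ≤ (ν Set.univ).toReal * KV * ∫ z, ‖z.1 - z.2‖ ∂γ := by
  have hγp : IsProbabilityMeasure γ := coupling_prob hγ h0.1
  have hVc : Continuous Vf := hVl.continuous
  have hmint : Integrable (fun z : Rd d × Rd d => ‖z.1 - z.2‖) γ :=
    coupling_integrable_dist hγ h0 h1
  have hm0 : 0 ≤ ∫ z : Rd d × Rd d, ‖z.1 - z.2‖ ∂γ :=
    integral_nonneg fun z => norm_nonneg _
  have hVd : ∀ a b : Rd d, |Vf a - Vf b| ≤ (KV : ℝ) * ‖a - b‖ := by
    intro a b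
    have := hVl.dist_le_mul a b
    rwa [Real.dist_eq, dist_eq_norm] at this
  set g : Rd d → ℝ := fun x => ∫ y, Vf (x - y) ∂ν with hg
  have hdiffint : ∀ x x' : Rd d, Integrable (fun y => Vf (x - y) - Vf (x' - y)) ν := by
    intro x x'
    refine Integrable.mono (integrable_const ((KV : ℝ) * ‖x - x'‖))
      ((hVc.comp (continuous_const.sub continuous_id)).sub
        (hVc.comp (continuous_const.sub continuous_id))).aestronglyMeasurable ?_
    filter_upwards with y
    rw [Real.norm_eq_abs, Real.norm_of_nonneg (by positivity)]
    calc |Vf (x - y) - Vf (x' - y)| ≤ (KV : ℝ) * ‖(x - y) - (x' - y)‖ := hVd _ _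
      _ = (KV : ℝ) * ‖x - x'‖ := by rw [sub_sub_sub_cancel_right]
  by_cases hI : Integrable (fun y => Vf (0 - y)) ν
  · -- integrable case
    have hIx : ∀ x : Rd d, Integrable (fun y => Vf (x - y)) ν := by
      intro x
      have : (fun y => Vf (x - y)) = fun y => Vf (0 - y) + (Vf (x - y) - Vf (0 - y)) := by
        funext y; ring
      rw [this]
      exact hI.add (hdiffint x 0)
    have hglip : LipschitzWith (KV * (ν Set.univ).toNNReal) g := by
      refine lipschitz_integral_kernel ν KV _ (fun y x x' => ?_) hIx
      calc |Vf (x - y) - Vf (x' - y)| ≤ (KV : ℝ) * ‖(x - y) - (x' - y)‖ := hVd _ _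
        _ = (KV : ℝ) * ‖x - x'‖ := by rw [sub_sub_sub_cancel_right]
    have hgc : Continuous g := hglip.continuous
    have hgint0 : Integrable (fun z : Rd d × Rd d => g z.1) γ :=
      integrable_fst hγ hgc (lipschitz_integrable hglip h0)
    have hgint1 : Integrable (fun z : Rd d × Rd d => g z.2) γ :=
      integrable_snd hγ hgc (lipschitz_integrable hglip h1)
    have hKcoe : ((KV * (ν Set.univ).toNNReal : ℝ≥0) : ℝ) = (ν Set.univ).toReal * KV := by
      push_cast; ring
    have hpt : ∀ z : Rd d × Rd d,
        g z.1 - g z.2 ≤ (ν Set.univ).toReal * (KV : ℝ) * ‖z.1 - z.2‖ := by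
      intro z
      have := hglip.dist_le_mul z.1 z.2
      rw [Real.dist_eq, dist_eq_norm, hKcoe] at this
      calc g z.1 - g z.2 ≤ |g z.1 - g z.2| := le_abs_self _
        _ ≤ (ν Set.univ).toReal * (KV : ℝ) * ‖z.1 - z.2‖ := this
    calc (∫ x, g x ∂ρ₀) - ∫ x, g x ∂ρ₁
        = ∫ z : Rd d × Rd d, (g z.1 - g z.2) ∂γ := by
          rw [← integral_fst hγ hgc, ← integral_snd hγ hgc, ← integral_sub hgint0 hgint1]
      _ ≤ ∫ z : Rd d × Rd d, (ν Set.univ).toReal * (KV : ℝ) * ‖z.1 - z.2‖ ∂γ :=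
          integral_mono (hgint0.sub hgint1) (hmint.const_mul _) hpt
      _ = (ν Set.univ).toReal * (KV : ℝ) * ∫ z : Rd d × Rd d, ‖z.1 - z.2‖ ∂γ :=
          integral_const_mul _ _
  · -- non-integrable case: both inner integrals are identically zero
    have hnx : ∀ x : Rd d, ¬ Integrable (fun y => Vf (x - y)) ν := by
      intro x hx
      refine hI ?_
      have : (fun y => Vf (0 - y)) = fun y => Vf (x - y) + (Vf (0 - y) - Vf (x - y)) := by
        funext y; ring
      rw [this]
      exact hx.add (hdiffint 0 x)
    have hgz : g = fun _ => (0 : ℝ) := funext fun x => integral_undef (hnx x)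
    have : (∫ x, g x ∂ρ₀) - ∫ x, g x ∂ρ₁ = 0 := by rw [hgz]; simp
    rw [this]
    positivity

lemma prod_mem_couplings (h0 : IsProbabilityMeasure ρ₀) (h1 : IsProbabilityMeasure ρ₁) :
    ρ₀.prod ρ₁ ∈ couplings ρ₀ ρ₁ :=
  ⟨by rw [Measure.map_fst_prod]; simp, by rw [Measure.map_snd_prod]; simp⟩

lemma lintegral_fst' (hγ : γ ∈ couplings ρ₀ ρ₁) {f : Rd d → ℝ≥0∞} (hf : Measurable f) :
    ∫⁻ z, f z.1 ∂γ = ∫⁻ x, f x ∂ρ₀ := by rw [← hγ.1, lintegral_map hf measurable_fst]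

lemma lintegral_snd' (hγ : γ ∈ couplings ρ₀ ρ₁) {f : Rd d → ℝ≥0∞} (hf : Measurable f) :
    ∫⁻ z, f z.2 ∂γ = ∫⁻ x, f x ∂ρ₁ := by rw [← hγ.2, lintegral_map hf measurable_snd]

lemma cost2_lt_top (h0 : MemP2 ρ₀) (h1 : MemP2 ρ₁) : cost2 ρ₀ ρ₁ < ⊤ := by
  have h0p := h0.1; have h1p := h1.1
  have hmem := prod_mem_couplings h0p h1p
  have hle : cost2 ρ₀ ρ₁ ≤ ∫⁻ z : Rd d × Rd d, ENNReal.ofReal (‖z.1 - z.2‖ ^ 2) ∂(ρ₀.prod ρ₁) :=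
    biInf_le _ hmem
  refine lt_of_le_of_lt hle ?_
  have hbound : ∀ z : Rd d × Rd d, ENNReal.ofReal (‖z.1 - z.2‖ ^ 2)
      ≤ ENNReal.ofReal (2 * ‖z.1‖ ^ 2) + ENNReal.ofReal (2 * ‖z.2‖ ^ 2) := by
    intro z
    rw [← ENNReal.ofReal_add (by positivity) (by positivity)]
    refine ENNReal.ofReal_le_ofReal ?_
    have h := norm_sub_le z.1 z.2
    nlinarith [norm_nonneg z.1, norm_nonneg z.2, norm_nonneg (z.1 - z.2),
      sq_nonneg (‖z.1‖ - ‖z.2‖)]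
  have hm : Measurable (fun x : Rd d => ENNReal.ofReal (2 * ‖x‖ ^ 2)) := by fun_prop
  calc ∫⁻ z : Rd d × Rd d, ENNReal.ofReal (‖z.1 - z.2‖ ^ 2) ∂(ρ₀.prod ρ₁)
      ≤ ∫⁻ z : Rd d × Rd d, (ENNReal.ofReal (2 * ‖z.1‖ ^ 2)
          + ENNReal.ofReal (2 * ‖z.2‖ ^ 2)) ∂(ρ₀.prod ρ₁) := lintegral_mono hbound
    _ = ∫⁻ x, ENNReal.ofReal (2 * ‖x‖ ^ 2) ∂ρ₀
          + ∫⁻ x, ENNReal.ofReal (2 * ‖x‖ ^ 2) ∂ρ₁ := by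
        rw [lintegral_add_left (by fun_prop) _, lintegral_fst' hmem hm, lintegral_snd' hmem hm]
    _ < ⊤ := by
        have e : ∀ ρ : Measure (Rd d), ∫⁻ x, ENNReal.ofReal (2 * ‖x‖ ^ 2) ∂ρ
            = 2 * ∫⁻ x, ENNReal.ofReal (‖x‖ ^ 2) ∂ρ := by
          intro ρ
          rw [← lintegral_const_mul _ (by fun_prop)]
          congr 1; funext x
          rw [ENNReal.ofReal_mul (by norm_num)]; norm_num
        rw [e, e]
        have := h0.2; have := h1.2
        have h2 : (2:ℝ≥0∞) ≠ ⊤ := by norm_num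
        refine ENNReal.add_lt_top.mpr ⟨?_, ?_⟩ <;> exact ENNReal.mul_lt_top (by norm_num) (by assumption)

lemma cost2_self_eq_zero (h0 : IsProbabilityMeasure ρ₀) : cost2 ρ₀ ρ₀ = 0 := by
  have hm : Measurable (fun x : Rd d => (x, x)) := measurable_id.prodMk measurable_id
  have hmem : ρ₀.map (fun x => (x, x)) ∈ couplings ρ₀ ρ₀ := by
    constructor
    · rw [Measure.map_map measurable_fst hm]; simp [Function.comp_def, Measure.map_id]
    · rw [Measure.map_map measurable_snd hm]; simp [Function.comp_def, Measure.map_id]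
  refine le_antisymm ?_ (zero_le ..)
  refine le_trans (biInf_le _ hmem) ?_
  rw [lintegral_map (by fun_prop) hm]
  simp

set_option maxHeartbeats 1000000 in
/-- One-step estimate for the JKO scheme: a minimizer `ρ₁` of the penalised functional
`μ ↦ (1/(2τ)) d_{W₂}²(ρ₀,μ) + ℱ_ν(μ)` over `P₂(ℝ^d)` satisfies
`d_{W₂}(ρ₀,ρ₁) ≤ 6 (M·Lip(V) + Lip(W)) τ`. -/
theorem statement_10 {d : ℕ} (W : Rd d → ℝ) (W' : Rd d → Rd d) (lam : ℝ) (KW : ℝ≥0)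
    (hW : IsSelfPotential W W' lam KW)
    (V : Rd d → ℝ) (V' : Rd d → Rd d) (KV : ℝ≥0) (hV : IsCrossPotential V V' KV)
    (M : ℝ) (ν : Measure (Rd d)) (hνfin : IsFiniteMeasure ν)
    (hνM : (ν Set.univ).toReal ≤ M)
    (τ : ℝ) (hτ : 0 < τ) (ρ₀ ρ₁ : Measure (Rd d)) (hρ₀ : MemP2 ρ₀) (hρ₁ : MemP2 ρ₁)
    (hmin : ∀ μ : Measure (Rd d), MemP2 μ →
      1 / (2 * τ) * W2sq ρ₀ ρ₁ + energy W V ν ρ₁ ≤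
        1 / (2 * τ) * W2sq ρ₀ μ + energy W V ν μ) :
    W2 ρ₀ ρ₁ ≤ ENNReal.ofReal (6 * (M * KV + KW) * τ) := by
    -- main proof
  classical
  have hprob0 := hρ₀.1
  have hprob1 := hρ₁.1
  set C : ℝ := M * (KV : ℝ) + (KW : ℝ) with hCdef
  have hM0 : 0 ≤ M := le_trans ENNReal.toReal_nonneg hνM
  have hC0 : 0 ≤ C := by positivity
  have hfin : cost2 ρ₀ ρ₁ < ⊤ := cost2_lt_top hρ₀ hρ₁
  set s : ℝ := (cost2 ρ₀ ρ₁).toReal with hsdef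
  have hs0 : 0 ≤ s := ENNReal.toReal_nonneg
  -- Step 1 : minimality against ρ₀
  have hstep1 : s ≤ (energy W V ν ρ₀ - energy W V ν ρ₁) * (2 * τ) := by
    have h := hmin ρ₀ hρ₀
    have hz : W2sq ρ₀ ρ₀ = 0 := by
      rw [W2sq, cost2_self_eq_zero hprob0]; simp
    rw [hz] at h
    have h2τ : (0:ℝ) < 2 * τ := by linarith
    have h' : 1 / (2 * τ) * s ≤ energy W V ν ρ₀ - energy W V ν ρ₁ := by
      have : W2sq ρ₀ ρ₁ = s := rfl
      rw [this] at h; linarith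
    have hmul := mul_le_mul_of_nonneg_left h' h2τ.le
    have hls : 2 * τ * (1 / (2 * τ) * s) = s := by field_simp
    rw [hls] at hmul
    linarith
  -- Step 2 : for every ε, ε' > 0, ε * s ≤ τ * C * (ε ^ 2 + s + ε')
  have hstep2 : ∀ ε > (0:ℝ), ∀ ε' > (0:ℝ), ε * s ≤ τ * C * (ε ^ 2 + s + ε') := by
    intro ε hε ε' hε'
    -- extract a near-optimal coupling
    have hlt : cost2 ρ₀ ρ₁ < cost2 ρ₀ ρ₁ + ENNReal.ofReal ε' :=
      ENNReal.lt_add_right hfin.ne (ENNReal.ofReal_pos.mpr hε').ne'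
    have hex : ∃ γ ∈ couplings ρ₀ ρ₁,
        ∫⁻ z : Rd d × Rd d, ENNReal.ofReal (‖z.1 - z.2‖ ^ 2) ∂γ
          < cost2 ρ₀ ρ₁ + ENNReal.ofReal ε' := by
      by_contra hcon
      push_neg at hcon
      have hle : cost2 ρ₀ ρ₁ + ENNReal.ofReal ε' ≤ cost2 ρ₀ ρ₁ := le_iInf₂ hcon
      exact absurd hle (not_le.mpr hlt)
    obtain ⟨γ, hγmem, hLγ⟩ := hex
    have hγp : IsProbabilityMeasure γ := coupling_prob hγmem hprob0
    have hLfin : ∫⁻ z : Rd d × Rd d, ENNReal.ofReal (‖z.1 - z.2‖ ^ 2) ∂γ < ⊤ :=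
      lt_of_lt_of_le hLγ (le_top.trans_eq' rfl) |>.trans_le le_top |>.trans_le le_rfl
    have Isq : Integrable (fun z : Rd d × Rd d => ‖z.1 - z.2‖ ^ 2) γ :=
      integrable_of_lintegral_lt ((continuous_fst.sub continuous_snd).norm.pow 2)
        (fun z => by positivity) (lt_of_lt_of_le hLγ le_top |>.trans_le le_rfl)
    set I : ℝ := ∫ z : Rd d × Rd d, ‖z.1 - z.2‖ ^ 2 ∂γ with hIdef
    have hIval : I = (∫⁻ z : Rd d × Rd d, ENNReal.ofReal (‖z.1 - z.2‖ ^ 2) ∂γ).toReal := by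
      rw [hIdef, integral_eq_lintegral_of_nonneg_ae (f := fun z : Rd d × Rd d => ‖z.1 - z.2‖ ^ 2) (ae_of_all _ fun z => by positivity)
        ((continuous_fst.sub continuous_snd).norm.pow 2).aestronglyMeasurable]
    have hIle : I ≤ s + ε' := by
      rw [hIval]
      have h1 : (∫⁻ z : Rd d × Rd d, ENNReal.ofReal (‖z.1 - z.2‖ ^ 2) ∂γ).toReal
          ≤ (cost2 ρ₀ ρ₁ + ENNReal.ofReal ε').toReal :=
        ENNReal.toReal_mono (by simp [hfin.ne]) hLγ.le
      rwa [ENNReal.toReal_add hfin.ne ENNReal.ofReal_ne_top,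
        ENNReal.toReal_ofReal hε'.le] at h1
    have hmint : Integrable (fun z : Rd d × Rd d => ‖z.1 - z.2‖) γ :=
      coupling_integrable_dist hγmem hρ₀ hρ₁
    set m : ℝ := ∫ z : Rd d × Rd d, ‖z.1 - z.2‖ ∂γ with hmdef
    have hm0 : 0 ≤ m := integral_nonneg fun z => norm_nonneg _
    -- AM-GM : 2 ε m ≤ ε² + I
    have hAM : 2 * ε * m ≤ ε ^ 2 + I := by
      have hpt : ∀ z : Rd d × Rd d, 2 * ε * ‖z.1 - z.2‖ ≤ ε ^ 2 + ‖z.1 - z.2‖ ^ 2 := by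
        intro z; nlinarith [sq_nonneg (‖z.1 - z.2‖ - ε)]
      have hint := integral_mono (hmint.const_mul (2 * ε))
        ((integrable_const (ε ^ 2)).add Isq) hpt
      simp only [Pi.add_apply] at hint
      rw [integral_const_mul, integral_add (integrable_const _) Isq, integral_const,
        probReal_univ, one_smul] at hint
      exact hint
    -- energy difference bound
    have hS := self_diff_le hW.lip hW.zero_at_zero hγmem hρ₀ hρ₁
    have hCr := cross_diff_le hV.lip ν hγmem hρ₀ hρ₁
    have hcross_le : (ν Set.univ).toReal * (KV : ℝ) * m ≤ M * (KV : ℝ) * m := by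
      have hprod : (0:ℝ) ≤ (M - (ν Set.univ).toReal) * ((KV : ℝ) * m) :=
        mul_nonneg (sub_nonneg.mpr hνM) (mul_nonneg KV.coe_nonneg hm0)
      nlinarith [hprod]
    have hE : energy W V ν ρ₀ - energy W V ν ρ₁ ≤ C * m := by
      rw [energy, energy, hCdef]
      rw [← hmdef] at hS hCr
      linarith
    have hs2 : s ≤ C * m * (2 * τ) := by
      calc s ≤ (energy W V ν ρ₀ - energy W V ν ρ₁) * (2 * τ) := hstep1
        _ ≤ C * m * (2 * τ) := by nlinarith [hE]
    -- combine
    have h1 : ε * s ≤ ε * (C * m * (2 * τ)) := mul_le_mul_of_nonneg_left hs2 hε.le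
    have h2 : τ * C * (2 * ε * m) ≤ τ * C * (ε ^ 2 + I) :=
      mul_le_mul_of_nonneg_left hAM (by positivity)
    have h3 : τ * C * (ε ^ 2 + I) ≤ τ * C * (ε ^ 2 + s + ε') :=
      mul_le_mul_of_nonneg_left (by linarith) (by positivity)
    nlinarith [h1, h2, h3]
  -- remove ε'
  have hstep3 : ∀ ε > (0:ℝ), ε * s ≤ τ * C * (ε ^ 2 + s) := by
    intro ε hε
    refine le_of_forall_pos_le_add fun δ hδ => ?_
    have hτC : 0 ≤ τ * C := by positivity
    obtain ⟨e', he'pos, he'le⟩ : ∃ e' > (0:ℝ), τ * C * e' ≤ δ := by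
      refine ⟨δ / (τ * C + 1), by positivity, ?_⟩
      rw [mul_div_assoc', div_le_iff₀ (by positivity)]
      nlinarith
    have h := hstep2 ε hε e' he'pos
    nlinarith [h, he'le]
  -- conclude s ≤ 4 τ² C²
  have hsle : s ≤ 4 * τ ^ 2 * C ^ 2 := by
    rcases eq_or_lt_of_le hC0 with hCz | hCpos
    · have h := hstep3 1 one_pos
      rw [← hCz] at h
      nlinarith [h]
    · have h := hstep3 (2 * τ * C) (by positivity)
      have hτC : 0 < τ * C := by positivity
      nlinarith [h, hτC]
    -- final conversion to W2
  have hsq : s ≤ (6 * C * τ) ^ 2 := by nlinarith [sq_nonneg (τ * C)]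
  have hconst0 : (0:ℝ) ≤ 6 * C * τ := by positivity
  have hcost : cost2 ρ₀ ρ₁ = ENNReal.ofReal s := (ENNReal.ofReal_toReal hfin.ne).symm
  rw [W2, hcost]
  have hmono : ENNReal.ofReal s ≤ ENNReal.ofReal ((6 * C * τ) ^ 2) :=
    ENNReal.ofReal_le_ofReal hsq
  calc ENNReal.ofReal s ^ (1 / 2 : ℝ)
      ≤ ENNReal.ofReal ((6 * C * τ) ^ 2) ^ (1 / 2 : ℝ) :=
        ENNReal.rpow_le_rpow hmono (by norm_num)
    _ = ENNReal.ofReal (((6 * C * τ) ^ 2) ^ (1 / 2 : ℝ)) :=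
        ENNReal.ofReal_rpow_of_nonneg (by positivity) (by norm_num)
    _ = ENNReal.ofReal (6 * (M * ↑KV + ↑KW) * τ) := by
        congr 1
        rw [← Real.rpow_natCast (6 * C * τ) 2, ← Real.rpow_mul hconst0]
        norm_num
        exact Or.inl hCdef

end
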